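/- Define φ: Z_{2k} → Z_2^k by φ(i) = (0^{(k−i)} | 1^{(i)}) for 0 ≤ i ≤ k−1 and φ(i+k) = φ(i) + 1^{(k)}. Then φ is weight-preserving and distance-preserving: wt(φ(i)) = w_L(i) and d(φ(i), φ(j)) = d_L(i, j) for all i, j ∈ Z_{2k}. -/

import Mathlib

/-- The standard Gray map `ZMod (2*k) → ZMod 2 ^ k`:
`φ(i) = 0^(k-i) | 1^(i)` for `0 ≤ i ≤ k-1`, and `φ(i+k) = φ(i) + 1^(k)`. -/
def gray (k : ℕ) (i : ZMod (2 * k)) : Fin k → ZMod 2 :=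
  fun j => if i.val < k then (if k ≤ j.val + i.val then 1 else 0)
           else (if k ≤ j.val + (i.val - k) then 0 else 1)

/-- Lee weight on `ZMod (2*k)`: the minimum absolute value of a representative. -/
def leeWt {k : ℕ} (x : ZMod (2 * k)) : ℕ := min x.val (2 * k - x.val)

section aux
variable {k : ℕ}

/-- The nat-level condition for `gray k i t = 1`. -/
def D (k v t : ℕ) : Prop := if v < k then k ≤ t + v else ¬ (k ≤ t + (v - k))

instance (k v t : ℕ) : Decidable (D k v t) := by unfold D; infer_instance

lemma gray_apply (i : ZMod (2*k)) (t : Fin k) :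
    gray k i t = if D k i.val t.val then 1 else 0 := by
  unfold gray D
  split_ifs <;> simp_all

lemma gray_ne_iff (i j : ZMod (2*k)) (t : Fin k) :
    gray k i t ≠ gray k j t ↔ ¬ (D k i.val t.val ↔ D k j.val t.val) := by
  rw [gray_apply, gray_apply]
  split_ifs with h1 h2 h2 <;> simp_all <;> decide

lemma val_succ (hk : 0 < k) (x : ZMod (2*k)) :
    (x + 1).val = if x.val + 1 < 2*k then x.val + 1 else 0 := by
  haveI : NeZero (2*k) := ⟨by omega⟩
  haveI : Fact (1 < 2*k) := ⟨by omega⟩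
  have hx := x.val_lt
  rw [ZMod.val_add, ZMod.val_one]
  split_ifs with h
  · exact Nat.mod_eq_of_lt h
  · have : x.val + 1 = 2*k := by omega
    rw [this, Nat.mod_self]

lemma key (hk : 0 < k) (v w t : ℕ) (hv : v < 2*k) (hw : w < 2*k) (ht : t < k) :
    (¬ (D k (if v + 1 < 2*k then v+1 else 0) t ↔ D k (if w + 1 < 2*k then w+1 else 0) t)) ↔
    (¬ (D k v (if t + 1 < k then t+1 else 0) ↔ D k w (if t + 1 < k then t+1 else 0))) := by
  unfold D
  split_ifs <;> omega

end aux

section main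
variable {k : ℕ}

lemma sigma_lt (hk : 0 < k) (t : Fin k) : (t.val + 1) % k < k := Nat.mod_lt _ hk

lemma sigma_eq (hk : 0 < k) (t : Fin k) :
    (t.val + 1) % k = if t.val + 1 < k then t.val + 1 else 0 := by
  have := t.isLt
  split_ifs with h
  · exact Nat.mod_eq_of_lt h
  · have : t.val + 1 = k := by omega
    rw [this, Nat.mod_self]

lemma pt_shift (hk : 0 < k) (i j : ZMod (2*k)) (t : Fin k) :
    (gray k (i+1) t ≠ gray k (j+1) t) ↔
    (gray k i ⟨(t.val+1) % k, sigma_lt hk t⟩ ≠ gray k j ⟨(t.val+1) % k, sigma_lt hk t⟩) := by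
  haveI : NeZero (2*k) := ⟨by omega⟩
  rw [gray_ne_iff, gray_ne_iff, val_succ hk, val_succ hk]
  simp only [sigma_eq hk]
  exact key hk i.val j.val t.val i.val_lt j.val_lt t.isLt

lemma shift (hk : 0 < k) (i j : ZMod (2*k)) :
    hammingDist (gray k (i+1)) (gray k (j+1)) = hammingDist (gray k i) (gray k j) := by
  unfold hammingDist
  apply Finset.card_bij' (fun t _ => (⟨(t.val+1) % k, sigma_lt hk t⟩ : Fin k))
    (fun s _ => (⟨(s.val + (k-1)) % k, Nat.mod_lt _ hk⟩ : Fin k))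
  · intro t ht
    simp only [Finset.mem_filter, Finset.mem_univ, true_and] at ht ⊢
    exact (pt_shift hk i j t).mp ht
  · intro s hs
    simp only [Finset.mem_filter, Finset.mem_univ, true_and] at hs ⊢
    have hinv : ((((s.val + (k-1)) % k : ℕ)) + 1) % k = s.val := by
      have h1 := s.isLt
      rcases Nat.lt_or_ge (s.val + (k-1)) k with h | h
      · rw [Nat.mod_eq_of_lt h]
        rcases Nat.lt_or_ge (s.val + (k-1) + 1) k with h2 | h2
        · rw [Nat.mod_eq_of_lt h2]; omega
        · have : s.val + (k-1) + 1 = k := by omega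
          rw [this, Nat.mod_self]; omega
      · have h3 : s.val + (k-1) - k < k := by omega
        rw [Nat.mod_eq_sub_mod h, Nat.mod_eq_of_lt h3]
        have h4 : s.val + (k-1) - k + 1 < k := by omega
        rw [Nat.mod_eq_of_lt h4]; omega
    have := (pt_shift hk i j ⟨(s.val + (k-1)) % k, Nat.mod_lt _ hk⟩).mpr
    simp only [hinv] at this
    exact this (by simpa using hs)
  · intro t ht
    simp only [Finset.mem_filter, Finset.mem_univ, true_and] at ht
    ext
    simp only
    have h1 := t.isLt
    rcases Nat.lt_or_ge (t.val + 1) k with h | h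
    · rw [Nat.mod_eq_of_lt h]
      rcases Nat.lt_or_ge (t.val + 1 + (k-1)) k with h2 | h2
      · rw [Nat.mod_eq_of_lt h2]; omega
      · rw [Nat.mod_eq_sub_mod h2, Nat.mod_eq_of_lt (by omega)]; omega
    · have : t.val + 1 = k := by omega
      rw [this, Nat.mod_self, Nat.zero_add, Nat.mod_eq_of_lt (by omega)]; omega
  · intro s hs
    ext
    simp only
    have h1 := s.isLt
    rcases Nat.lt_or_ge (s.val + (k-1)) k with h | h
    · rw [Nat.mod_eq_of_lt h]
      rcases Nat.lt_or_ge (s.val + (k-1) + 1) k with h2 | h2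
      · rw [Nat.mod_eq_of_lt h2]; omega
      · have : s.val + (k-1) + 1 = k := by omega
        rw [this, Nat.mod_self]; omega
    · have e : (s.val + (k-1)) % k = s.val - 1 := by
        rw [Nat.mod_eq_sub_mod h, Nat.mod_eq_of_lt (by omega)]; omega
      rw [e, Nat.mod_eq_of_lt (by omega)]; omega

end main

section final
variable {k : ℕ}

lemma shift_nat (hk : 0 < k) (m : ℕ) (i j : ZMod (2*k)) :
    hammingDist (gray k (i + m)) (gray k (j + m)) = hammingDist (gray k i) (gray k j) := by
  induction m generalizing i j with
  | zero => simp
  | succ m ih =>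
    have h1 : (i + (↑(m+1) : ZMod (2*k))) = (i + 1) + m := by push_cast; ring
    have h2 : (j + (↑(m+1) : ZMod (2*k))) = (j + 1) + m := by push_cast; ring
    rw [h1, h2, ih, shift hk]

lemma card_filter_fin (k : ℕ) (p : ℕ → Prop) [DecidablePred p] :
    (Finset.univ.filter fun t : Fin k => p t.val).card = ((Finset.range k).filter p).card := by
  rw [Finset.card_filter, Finset.card_filter]
  exact Fin.sum_univ_eq_sum_range (fun t => if p t then (1:ℕ) else 0) k

lemma gray_zero (hk : 0 < k) : gray k 0 = 0 := by
  haveI : NeZero (2*k) := ⟨by omega⟩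
  funext t
  have := t.isLt
  simp only [gray, ZMod.val_zero]
  rw [if_pos hk, if_neg (by omega)]
  rfl

lemma norm_gray (hk : 0 < k) (i : ZMod (2*k)) : hammingNorm (gray k i) = leeWt i := by
  haveI : NeZero (2*k) := ⟨by omega⟩
  have hv := i.val_lt
  unfold hammingNorm leeWt
  have : ∀ t : Fin k, (gray k i t ≠ 0) ↔ D k i.val t.val := by
    intro t
    rw [gray_apply]
    split_ifs <;> simp_all
  calc (Finset.univ.filter fun t : Fin k => gray k i t ≠ 0).card
      = (Finset.univ.filter fun t : Fin k => D k i.val t.val).card := by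
        apply Finset.card_bij (fun t _ => t) <;> simp_all [this]
    _ = ((Finset.range k).filter fun t => D k i.val t).card := card_filter_fin k _
    _ = min i.val (2*k - i.val) := by
        rcases Nat.lt_or_ge i.val k with h | h
        · rw [show ((Finset.range k).filter fun t => D k i.val t) = ((Finset.range k).filter fun t => k ≤ t + i.val) from Finset.filter_congr (fun t ht => by simp only [D, if_pos h])]
          have : ((Finset.range k).filter fun t => k ≤ t + i.val) = Finset.Ico (k - i.val) k := by
            ext x; simp [Finset.mem_filter, Finset.mem_range, Finset.mem_Ico]; omega
          rw [this, Nat.card_Ico]; omega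
        · rw [show ((Finset.range k).filter fun t => D k i.val t) = ((Finset.range k).filter fun t => ¬ k ≤ t + (i.val - k)) from Finset.filter_congr (fun t ht => by simp only [D, if_neg (show ¬ i.val < k by omega)])]
          have : ((Finset.range k).filter fun t => ¬ k ≤ t + (i.val - k)) = Finset.range (2*k - i.val) := by
            ext x; simp [Finset.mem_filter, Finset.mem_range]; omega
          rw [this, Finset.card_range]; omega

theorem gray_dist_aux (k : ℕ) (hk : 0 < k) :
    (∀ i : ZMod (2 * k), hammingNorm (gray k i) = leeWt i) ∧
    (∀ i j : ZMod (2 * k), hammingDist (gray k i) (gray k j) = leeWt (i - j)) := by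
  haveI : NeZero (2*k) := ⟨by omega⟩
  refine ⟨norm_gray hk, fun i j => ?_⟩
  have hcast : (((-j).val : ZMod (2*k))) = -j := by
    rw [ZMod.natCast_val, ZMod.cast_id]
  have := shift_nat hk (-j).val i j
  rw [hcast] at this
  rw [add_neg_cancel, ← sub_eq_add_neg] at this
  rw [← this, gray_zero hk, hammingDist_zero_right, norm_gray hk]
end final

theorem gray_weight_and_distance_preserving (k : ℕ) (hk : 0 < k) :
    (∀ i : ZMod (2 * k), hammingNorm (gray k i) = leeWt i) ∧
    (∀ i j : ZMod (2 * k), hammingDist (gray k i) (gray k j) = leeWt (i - j)) := gray_dist_aux k hk
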